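/- Let n ≥ 1 and 1 < p < ∞, and define V_p : ℝⁿ → ℝⁿ by V_p(η) = (1+|η|²)^((p−2)/4) η. Then there exists a constant C = C(n,p) > 0 such that for all ξ, η ∈ ℝⁿ with ξ ≠ η one has C⁻¹ (1+|ξ|²+|η|²)^((p−2)/2) ≤ |V_p(ξ) − V_p(η)|² / |ξ − η|² ≤ C (1+|ξ|²+|η|²)^((p−2)/2). -/

import Mathlib

open Real
set_option maxHeartbeats 1000000


private lemma hasDerivAt_gfun (q x : ℝ) :
    HasDerivAt (fun y : ℝ => (1 + y ^ 2) ^ q * y)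
      ((1 + x ^ 2) ^ (q - 1) * (1 + (1 + 2 * q) * x ^ 2)) x := by
  have hpos : (0:ℝ) < 1 + x ^ 2 := by positivity
  have h1 : HasDerivAt (fun y : ℝ => 1 + y ^ 2) (2 * x) x := by
    simpa using ((hasDerivAt_pow 2 x).const_add 1)
  have h2 : HasDerivAt (fun y : ℝ => (1 + y ^ 2) ^ q)
      (q * (1 + x ^ 2) ^ (q - 1) * (2 * x)) x :=
    by have := (Real.hasDerivAt_rpow_const (x := 1 + x ^ 2) (p := q) (Or.inl hpos.ne')).comp x h1; exact this
  have h3 : HasDerivAt (fun y : ℝ => (1 + y ^ 2) ^ q * y) _ x := h2.mul (hasDerivAt_id x)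
  convert h3 using 1
  have : (1 + x ^ 2) ^ q = (1 + x ^ 2) ^ (q - 1) * (1 + x ^ 2) := by
    rw [show q = (q-1)+1 by ring, Real.rpow_add hpos, Real.rpow_one]; ring_nf
  rw [this]; ring


private lemma deriv_le_slope {f f' : ℝ → ℝ} (hf : ∀ x, HasDerivAt f (f' x) x)
    {t s κ : ℝ} (hts : t ≤ s) (hb : ∀ x ∈ Set.Icc t s, f' x ≤ κ) :
    f s - f t ≤ κ * (s - t) := by
  have hF : ∀ x, HasDerivAt (fun y => κ * y - f y) (κ - f' x) x :=
    fun x => by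
      have h := ((hasDerivAt_id x).const_mul κ).sub (hf x)
      simp only [id, mul_one] at h
      exact h
  have hdiff : Differentiable ℝ (fun y => κ * y - f y) := fun x => (hF x).differentiableAt
  have hmono : MonotoneOn (fun y => κ * y - f y) (Set.Icc t s) := by
    apply monotoneOn_of_deriv_nonneg (convex_Icc t s) hdiff.continuous.continuousOn
      hdiff.differentiableOn
    intro x hx
    rw [(hF x).deriv]
    rw [interior_Icc] at hx
    have := hb x (Set.Ioo_subset_Icc_self hx)
    linarith
  have := hmono (Set.left_mem_Icc.mpr hts) (Set.right_mem_Icc.mpr hts) hts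
  simp only at this
  linarith

private lemma slope_le_deriv {f f' : ℝ → ℝ} (hf : ∀ x, HasDerivAt f (f' x) x)
    {t s κ : ℝ} (hts : t ≤ s) (hb : ∀ x ∈ Set.Icc t s, κ ≤ f' x) :
    κ * (s - t) ≤ f s - f t := by
  have := deriv_le_slope (f := fun y => -f y) (f' := fun y => -f' y)
    (fun x => (hf x).neg) hts (κ := -κ) (fun x hx => by simpa using hb x hx)
  linarith

private lemma scalar_bounds (p : ℝ) (hp : 1 < p) {τ σ : ℝ} (h0 : 0 ≤ τ) (hts : τ ≤ σ) :
    min 1 (p/2) * (1+σ^2) ^ ((p-2)/4) * (σ - τ)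
        ≤ (1+σ^2) ^ ((p-2)/4) * σ - (1+τ^2) ^ ((p-2)/4) * τ ∧
    (1+σ^2) ^ ((p-2)/4) * σ - (1+τ^2) ^ ((p-2)/4) * τ
        ≤ max 2 (p/2) * (1+σ^2) ^ ((p-2)/4) * (σ - τ) ∧
    (1/2) * (1+σ^2) ^ ((p-2)/4) * (σ + τ)
        ≤ (1+σ^2) ^ ((p-2)/4) * σ + (1+τ^2) ^ ((p-2)/4) * τ ∧
    (1+σ^2) ^ ((p-2)/4) * σ + (1+τ^2) ^ ((p-2)/4) * τ
        ≤ max 2 (p/2) * (1+σ^2) ^ ((p-2)/4) * (σ + τ) := by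
  set q : ℝ := (p-2)/4 with hq
  have hσ0 : 0 ≤ σ := le_trans h0 hts
  have hA : (0:ℝ) < 1 + σ^2 := by positivity
  have hB : (0:ℝ) < 1 + τ^2 := by positivity
  have hBA : 1 + τ^2 ≤ 1 + σ^2 := by nlinarith
  have hq2 : 1 + 2*q = p/2 := by rw [hq]; ring
  have ha0 : (0:ℝ) ≤ (1+σ^2) ^ q := (Real.rpow_pos_of_pos hA q).le
  have hb0 : (0:ℝ) ≤ (1+τ^2) ^ q := (Real.rpow_pos_of_pos hB q).le
  have hp0 : (0:ℝ) < p/2 := by linarith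
  -- pointwise facts about the derivative on [τ, σ]
  have hxfacts : ∀ x ∈ Set.Icc τ σ, (0:ℝ) < 1 + x^2 ∧ 1 + x^2 ≤ 1 + σ^2 ∧
      (1 + x^2) ^ (q-1) * (1 + x^2) = (1 + x^2) ^ q := by
    intro x hx
    have hx1 : τ ≤ x := hx.1
    have hx2 : x ≤ σ := hx.2
    have h1 : (0:ℝ) < 1 + x^2 := by positivity
    refine ⟨h1, by nlinarith, ?_⟩
    rw [show q = (q-1)+1 by ring, Real.rpow_add h1, Real.rpow_one]; ring_nf
  -- monotonicity of g : g σ ≥ g τ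
  have hmono : (1+τ^2) ^ q * τ ≤ (1+σ^2) ^ q * σ := by
    have := slope_le_deriv (fun x => hasDerivAt_gfun q x) hts (κ := 0) ?_
    · simpa using this
    · intro x hx
      obtain ⟨h1, h2, h3⟩ := hxfacts x hx
      have := hx.1
      have hcoef : (0:ℝ) < 1 + (1+2*q)*x^2 := by rw [hq2]; nlinarith
      positivity
  -- I1
  have hI1 : min 1 (p/2) * (1+σ^2) ^ q * (σ - τ)
      ≤ (1+σ^2) ^ q * σ - (1+τ^2) ^ q * τ := by
    rcases le_or_gt 2 p with h2p | h2p
    · -- q ≥ 0 : b ≤ a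
      have hq0 : 0 ≤ q := by rw [hq]; linarith
      have hba : (1+τ^2) ^ q ≤ (1+σ^2) ^ q := Real.rpow_le_rpow hB.le hBA hq0
      have hmin : min 1 (p/2) ≤ 1 := min_le_left _ _
      have hmin0 : 0 ≤ min 1 (p/2) := le_min (by norm_num) hp0.le
      nlinarith [mul_le_mul_of_nonneg_right hba h0]
    · -- q < 0 : MVT from below with κ = (p/2) * a
      have hq0 : q ≤ 0 := by rw [hq]; linarith
      have hmin : min 1 (p/2) = p/2 := min_eq_right (by linarith)
      rw [hmin]
      have hmvt := slope_le_deriv (fun x => hasDerivAt_gfun q x) hts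
        (κ := p/2 * (1+σ^2) ^ q) ?_
      · linarith
      · intro x hx
        obtain ⟨h1, h2, h3⟩ := hxfacts x hx
        have hax : (1+σ^2) ^ q ≤ (1+x^2) ^ q :=
          Real.rpow_le_rpow_of_nonpos h1 h2 hq0
        have hcoef : p/2 * (1 + x^2) ≤ 1 + (1+2*q)*x^2 := by
          rw [hq2]; nlinarith
        calc p/2 * (1+σ^2) ^ q ≤ p/2 * (1+x^2) ^ q := by nlinarith
          _ ≤ (1+x^2) ^ (q-1) * (1 + (1+2*q)*x^2) := by
              rw [← h3]
              have h4 : (0:ℝ) < (1+x^2) ^ (q-1) := Real.rpow_pos_of_pos h1 _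
              nlinarith
  -- I3
  have hI3 : (1+σ^2) ^ q * σ - (1+τ^2) ^ q * τ
      ≤ max 2 (p/2) * (1+σ^2) ^ q * (σ - τ) := by
    rcases le_or_gt 2 p with h2p | h2p
    · -- q ≥ 0 : MVT from above with κ = (p/2) * a
      have hq0 : 0 ≤ q := by rw [hq]; linarith
      have hmax : p/2 ≤ max 2 (p/2) := le_max_right _ _
      have hmvt := deriv_le_slope (fun x => hasDerivAt_gfun q x) hts
        (κ := p/2 * (1+σ^2) ^ q) ?_
      · have haστ : 0 ≤ (1+σ^2) ^ q * (σ - τ) := mul_nonneg ha0 (by linarith)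
        nlinarith
      · intro x hx
        obtain ⟨h1, h2, h3⟩ := hxfacts x hx
        have hax : (1+x^2) ^ q ≤ (1+σ^2) ^ q := Real.rpow_le_rpow h1.le h2 hq0
        have hcoef : 1 + (1+2*q)*x^2 ≤ p/2 * (1 + x^2) := by
          rw [hq2]; nlinarith
        have h4 : (0:ℝ) < (1+x^2) ^ (q-1) := Real.rpow_pos_of_pos h1 _
        calc (1+x^2) ^ (q-1) * (1 + (1+2*q)*x^2) ≤ p/2 * (1+x^2) ^ q := by
              rw [← h3]; nlinarith
          _ ≤ p/2 * (1+σ^2) ^ q := by nlinarith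
    · -- q < 0
      have hq0 : q ≤ 0 := by rw [hq]; linarith
      have hmax : (2:ℝ) ≤ max 2 (p/2) := le_max_left _ _
      have haστ : 0 ≤ (1+σ^2) ^ q * (σ - τ) := mul_nonneg ha0 (by linarith)
      rcases le_or_gt ((1+τ^2) ^ q) (2 * (1+σ^2) ^ q) with hcase | hcase
      · have hmvt := deriv_le_slope (fun x => hasDerivAt_gfun q x) hts
          (κ := 2 * (1+σ^2) ^ q) ?_
        · nlinarith
        · intro x hx
          obtain ⟨h1, h2, h3⟩ := hxfacts x hx
          have hbx : (1+x^2) ^ q ≤ (1+τ^2) ^ q := by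
            apply Real.rpow_le_rpow_of_nonpos hB ?_ hq0
            have := hx.1; nlinarith
          have hcoef : 1 + (1+2*q)*x^2 ≤ 1 + x^2 := by
            rw [hq2]; nlinarith
          have h4 : (0:ℝ) < (1+x^2) ^ (q-1) := Real.rpow_pos_of_pos h1 _
          calc (1+x^2) ^ (q-1) * (1 + (1+2*q)*x^2) ≤ (1+x^2) ^ q := by
                rw [← h3]; nlinarith
            _ ≤ (1+τ^2) ^ q := hbx
            _ ≤ 2 * (1+σ^2) ^ q := hcase
      · nlinarith [mul_le_mul_of_nonneg_right hcase.le h0, mul_nonneg ha0 hσ0]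

  -- I2
  have hI2 : (1/2) * (1+σ^2) ^ q * (σ + τ)
      ≤ (1+σ^2) ^ q * σ + (1+τ^2) ^ q * τ := by
    nlinarith [mul_nonneg hb0 h0]
  -- I4
  have hI4 : (1+σ^2) ^ q * σ + (1+τ^2) ^ q * τ
      ≤ max 2 (p/2) * (1+σ^2) ^ q * (σ + τ) := by
    have hmax : (2:ℝ) ≤ max 2 (p/2) := le_max_left _ _
    have h1 : (1+σ^2) ^ q * σ + (1+τ^2) ^ q * τ ≤ 2 * ((1+σ^2) ^ q * σ) := by
      linarith
    nlinarith [mul_nonneg ha0 (by linarith : (0:ℝ) ≤ σ + τ), mul_nonneg ha0 hσ0]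
  exact ⟨hI1, hI3, hI2, hI4⟩

private lemma half (n : ℕ) (p : ℝ) (hp : 1 < p) (ξ η : EuclideanSpace ℝ (Fin n))
    (hne : ξ ≠ η) (hle : ‖η‖ ≤ ‖ξ‖) :
    (min 1 (p/2) / 2)^2 * (1+‖ξ‖^2) ^ ((p-2)/2)
        ≤ ‖((1+‖ξ‖^2) ^ ((p-2)/4)) • ξ - ((1+‖η‖^2) ^ ((p-2)/4)) • η‖^2 / ‖ξ - η‖^2 ∧
    ‖((1+‖ξ‖^2) ^ ((p-2)/4)) • ξ - ((1+‖η‖^2) ^ ((p-2)/4)) • η‖^2 / ‖ξ - η‖^2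
        ≤ (max 2 (p/2))^2 * (1+‖ξ‖^2) ^ ((p-2)/2) := by
  set σ : ℝ := ‖ξ‖ with hσdef
  set τ : ℝ := ‖η‖ with hτdef
  set q : ℝ := (p-2)/4 with hqdef
  set a : ℝ := (1+σ^2) ^ q with hadef
  set b : ℝ := (1+τ^2) ^ q with hbdef
  set I : ℝ := inner ℝ ξ η with hIdef
  have hτ0 : 0 ≤ τ := norm_nonneg η
  have hσ0 : 0 ≤ σ := norm_nonneg ξ
  have hA : (0:ℝ) < 1 + σ^2 := by positivity
  have ha0 : 0 ≤ a := (Real.rpow_pos_of_pos hA q).le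
  have hb0 : 0 ≤ b := (Real.rpow_pos_of_pos (by positivity) q).le
  have h1 : ‖a • ξ‖ = a * σ := by
    rw [norm_smul, Real.norm_eq_abs, abs_of_nonneg ha0]
  have h2 : ‖b • η‖ = b * τ := by
    rw [norm_smul, Real.norm_eq_abs, abs_of_nonneg hb0]
  have h3 : (inner ℝ (a • ξ) (b • η) : ℝ) = a * b * I := by
    rw [real_inner_smul_left, real_inner_smul_right, hIdef]; ring
  have hX : ‖a • ξ - b • η‖^2 = (a*σ)^2 - 2*(a*b*I) + (b*τ)^2 := by
    rw [norm_sub_sq_real, h1, h2, h3]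
  have hD : ‖ξ - η‖^2 = σ^2 - 2*I + τ^2 := by
    rw [norm_sub_sq_real]
  have hCS : |I| ≤ σ * τ := abs_real_inner_le_norm ξ η
  have hDpos : (0:ℝ) < ‖ξ - η‖^2 := by
    have h := sub_ne_zero.mpr hne
    have := norm_pos_iff.mpr h
    positivity
  obtain ⟨hCS1, hCS2⟩ := abs_le.mp hCS
  have hlow : (σ - τ)^2 ≤ ‖ξ - η‖^2 := by rw [hD]; nlinarith
  have hhigh : ‖ξ - η‖^2 ≤ (σ + τ)^2 := by rw [hD]; nlinarith
  obtain ⟨i1, i3, i2, i4⟩ := scalar_bounds p hp hτ0 hle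
  rw [← hqdef, ← hadef, ← hbdef] at i1 i3 i2 i4
  have hp0 : (0:ℝ) < p/2 := by linarith
  have hmin0 : (0:ℝ) < min 1 (p/2) := lt_min one_pos hp0
  have hmax0 : (0:ℝ) < max 2 (p/2) := lt_max_of_lt_left two_pos
  have hστm : 0 ≤ σ - τ := by linarith
  have hστp : 0 ≤ σ + τ := by linarith
  -- squared endpoint bounds
  set cL : ℝ := min 1 (p/2) / 2 with hcL
  set CU : ℝ := max 2 (p/2) with hCU
  have hcL0 : 0 < cL := by positivity
  have hcLm : cL ≤ min 1 (p/2) := by rw [hcL]; linarith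
  have hcLh : cL ≤ 1/2 := by
    have := min_le_left 1 (p/2); rw [hcL]; linarith
  have hsq : ∀ x y : ℝ, 0 ≤ x → x ≤ y → x^2 ≤ y^2 := by
    intro x y hx hxy; nlinarith
  have hi1' : cL * a * (σ - τ) ≤ a*σ - b*τ :=
    le_trans (mul_le_mul_of_nonneg_right (mul_le_mul_of_nonneg_right hcLm ha0) hστm) i1
  have hi2' : cL * a * (σ + τ) ≤ a*σ + b*τ :=
    le_trans (mul_le_mul_of_nonneg_right (mul_le_mul_of_nonneg_right hcLh ha0) hστp) i2
  have hEm_low : (cL*a)^2 * (σ-τ)^2 ≤ (a*σ - b*τ)^2 := by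
    have h' := hsq _ _ (by positivity) hi1'
    calc (cL*a)^2 * (σ-τ)^2 = (cL*a*(σ-τ))^2 := by ring
      _ ≤ _ := h'
  have hEp_low : (cL*a)^2 * (σ+τ)^2 ≤ (a*σ + b*τ)^2 := by
    have h' := hsq _ _ (by positivity) hi2'
    calc (cL*a)^2 * (σ+τ)^2 = (cL*a*(σ+τ))^2 := by ring
      _ ≤ _ := h'
  have hL0m : 0 ≤ a*σ - b*τ := by
    have h' : 0 ≤ cL * a * (σ - τ) := by positivity
    linarith
  have hEm_up : (a*σ - b*τ)^2 ≤ (CU*a)^2 * (σ-τ)^2 := by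
    have h' := hsq _ _ hL0m i3
    calc (a*σ - b*τ)^2 ≤ (CU * a * (σ-τ))^2 := h'
      _ = (CU*a)^2 * (σ-τ)^2 := by ring
  have hEp_up : (a*σ + b*τ)^2 ≤ (CU*a)^2 * (σ+τ)^2 := by
    have h' := hsq _ _ (by positivity) i4
    calc (a*σ + b*τ)^2 ≤ (CU * a * (σ+τ))^2 := h'
      _ = (CU*a)^2 * (σ+τ)^2 := by ring
  -- linear interpolation in D
  have hKid : ‖a • ξ - b • η‖^2
      = a*b*(‖ξ - η‖^2) + (a-b)*(a*σ^2-b*τ^2) := by rw [hX, hD]; ring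
  have hlower : (cL*a)^2 * ‖ξ - η‖^2 ≤ ‖a • ξ - b • η‖^2 := by
    have hEm_eq : a*b*(σ-τ)^2 + (a-b)*(a*σ^2-b*τ^2) = (a*σ - b*τ)^2 := by ring
    have hEp_eq : a*b*(σ+τ)^2 + (a-b)*(a*σ^2-b*τ^2) = (a*σ + b*τ)^2 := by ring
    rcases le_or_gt ((cL*a)^2) (a*b) with h | h
    · have hprod := mul_le_mul_of_nonneg_left hlow (sub_nonneg.mpr h)
      linarith [hprod, hEm_low, hKid, hEm_eq]
    · have hprod := mul_le_mul_of_nonpos_left hhigh (by linarith : a*b - (cL*a)^2 ≤ 0)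
      linarith [hprod, hEp_low, hKid, hEp_eq]
  have hupper : ‖a • ξ - b • η‖^2 ≤ (CU*a)^2 * ‖ξ - η‖^2 := by
    have hEm_eq : a*b*(σ-τ)^2 + (a-b)*(a*σ^2-b*τ^2) = (a*σ - b*τ)^2 := by ring
    have hEp_eq : a*b*(σ+τ)^2 + (a-b)*(a*σ^2-b*τ^2) = (a*σ + b*τ)^2 := by ring
    rcases le_or_gt (a*b) ((CU*a)^2) with h | h
    · have hprod := mul_le_mul_of_nonneg_left hlow (sub_nonneg.mpr h)
      linarith [hprod, hEm_up, hKid, hEm_eq]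
    · have hprod := mul_le_mul_of_nonneg_left hhigh (by linarith : 0 ≤ a*b - (CU*a)^2)
      linarith [hprod, hEp_up, hKid, hEp_eq]
  -- convert a^2 to the (p-2)/2 power and divide
  have ha2 : a^2 = (1+σ^2) ^ ((p-2)/2) := by
    rw [hadef, sq, ← Real.rpow_add hA, hqdef]; ring_nf
  constructor
  · rw [le_div_iff₀ hDpos]
    calc (min 1 (p/2) / 2)^2 * (1+σ^2) ^ ((p-2)/2) * ‖ξ - η‖^2
        = (cL*a)^2 * ‖ξ - η‖^2 := by rw [← ha2, hcL]; ring
      _ ≤ _ := hlower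
  · rw [div_le_iff₀ hDpos]
    calc ‖a • ξ - b • η‖^2 ≤ (CU*a)^2 * ‖ξ - η‖^2 := hupper
      _ = (max 2 (p/2))^2 * (1+σ^2) ^ ((p-2)/2) * ‖ξ - η‖^2 := by
          rw [← ha2, hCU]; ring

private lemma rpow_comp {A M r : ℝ} (hA : 0 < A) (h1 : A ≤ M) (h2 : M ≤ 2*A) :
    M ^ r ≤ 2^|r| * A^r ∧ A^r ≤ 2^|r| * M^r := by
  have hM : 0 < M := lt_of_lt_of_le hA h1
  rcases le_or_gt 0 r with hr | hr
  · rw [abs_of_nonneg hr]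
    constructor
    · calc M^r ≤ (2*A)^r := Real.rpow_le_rpow hM.le h2 hr
        _ = 2^r * A^r := Real.mul_rpow (by norm_num) hA.le
    · have h3 : A^r ≤ M^r := Real.rpow_le_rpow hA.le h1 hr
      have h4 : (1:ℝ) ≤ 2^r := Real.one_le_rpow one_le_two hr
      nlinarith [Real.rpow_nonneg hM.le r]
  · rw [abs_of_neg hr]
    constructor
    · have h3 : M^r ≤ A^r := Real.rpow_le_rpow_of_nonpos hA h1 hr.le
      have h4 : (1:ℝ) ≤ 2^(-r) := Real.one_le_rpow one_le_two (by linarith)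
      nlinarith [Real.rpow_nonneg hA.le r]
    · have h3 : A^r ≤ (M/2)^r :=
        Real.rpow_le_rpow_of_nonpos (by linarith) (by linarith) hr.le
      have h4 : (M/2)^r = 2^(-r) * M^r := by
        rw [Real.div_rpow hM.le (by norm_num), Real.rpow_neg (by norm_num)]
        ring
      rw [h4] at h3; exact h3

private lemma final_conv (p : ℝ) (hp : 1 < p) {A M R : ℝ} (hA : 0 < A) (h1 : A ≤ M)
    (h2 : M ≤ 2*A)
    (hl : (min 1 (p/2) / 2)^2 * A ^ ((p-2)/2) ≤ R)
    (hu : R ≤ (max 2 (p/2))^2 * A ^ ((p-2)/2)) :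
    ((2:ℝ)^|(p-2)/2| * ((max 2 (p/2))^2 + ((min 1 (p/2)/2)^2)⁻¹))⁻¹ * M ^ ((p-2)/2) ≤ R ∧
    R ≤ ((2:ℝ)^|(p-2)/2| * ((max 2 (p/2))^2 + ((min 1 (p/2)/2)^2)⁻¹)) * M ^ ((p-2)/2) := by
  set r : ℝ := (p-2)/2 with hrdef
  set cL : ℝ := min 1 (p/2) / 2 with hcL
  set CU : ℝ := max 2 (p/2) with hCU
  have hp0 : (0:ℝ) < p/2 := by linarith
  have hcL0 : 0 < cL := by rw [hcL]; have := lt_min one_pos hp0; positivity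
  have hCU0 : (0:ℝ) < CU := lt_max_of_lt_left two_pos
  have h2r : (0:ℝ) < 2^|r| := Real.rpow_pos_of_pos two_pos _
  have h2r1 : (1:ℝ) ≤ 2^|r| := Real.one_le_rpow one_le_two (abs_nonneg r)
  have hMr : (0:ℝ) ≤ M ^ r := Real.rpow_nonneg (by linarith) r
  have hAr : (0:ℝ) ≤ A ^ r := Real.rpow_nonneg hA.le r
  obtain ⟨c1, c2⟩ := rpow_comp hA h1 h2 (r := r)
  set C : ℝ := 2^|r| * (CU^2 + (cL^2)⁻¹) with hCdef
  have hC0 : 0 < C := by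
    have : (0:ℝ) < CU^2 + (cL^2)⁻¹ := by positivity
    positivity
  constructor
  · -- C⁻¹ * M^r ≤ cL^2 * A^r ≤ R
    have hCge : 2^|r| * (cL^2)⁻¹ ≤ C := by
      rw [hCdef]
      have : (0:ℝ) ≤ 2^|r| * CU^2 := by positivity
      nlinarith
    have hCinv : C⁻¹ ≤ (2^|r| * (cL^2)⁻¹)⁻¹ := by
      apply inv_anti₀ (by positivity) hCge
    have hkey : C⁻¹ * M ^ r ≤ (2^|r| * (cL^2)⁻¹)⁻¹ * (2^|r| * A^r) := by
      apply mul_le_mul hCinv c1 hMr (by positivity)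
    calc C⁻¹ * M ^ r ≤ (2^|r| * (cL^2)⁻¹)⁻¹ * (2^|r| * A^r) := hkey
      _ = cL^2 * A^r := by
          field_simp
      _ ≤ R := hl
  · -- R ≤ CU^2 * A^r ≤ CU^2 * 2^|r| * M^r ≤ C * M^r
    have h5 : CU^2 * A^r ≤ CU^2 * (2^|r| * M^r) :=
      mul_le_mul_of_nonneg_left c2 (by positivity)
    have h6 : CU^2 * (2^|r| * M^r) ≤ C * M^r := by
      rw [hCdef]
      have h7 : (0:ℝ) ≤ (cL^2)⁻¹ * (2^|r| * M^r) := by positivity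
      nlinarith
    calc R ≤ CU^2 * A^r := hu
      _ ≤ CU^2 * (2^|r| * M^r) := h5
      _ ≤ C * M^r := h6


open MeasureTheory Metric Real

/-- comparability of the auxiliary function `V_p`. -/
theorem stmt_0 (n : ℕ) (hn : 1 ≤ n) (p : ℝ) (hp : 1 < p) :
    ∃ C : ℝ, 0 < C ∧ ∀ ξ η : EuclideanSpace ℝ (Fin n), ξ ≠ η →
      C⁻¹ * (1 + ‖ξ‖ ^ 2 + ‖η‖ ^ 2) ^ ((p - 2) / 2) ≤
        ‖((1 + ‖ξ‖ ^ 2) ^ ((p - 2) / 4)) • ξ - ((1 + ‖η‖ ^ 2) ^ ((p - 2) / 4)) • η‖ ^ 2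
          / ‖ξ - η‖ ^ 2 ∧
      ‖((1 + ‖ξ‖ ^ 2) ^ ((p - 2) / 4)) • ξ - ((1 + ‖η‖ ^ 2) ^ ((p - 2) / 4)) • η‖ ^ 2
          / ‖ξ - η‖ ^ 2 ≤
        C * (1 + ‖ξ‖ ^ 2 + ‖η‖ ^ 2) ^ ((p - 2) / 2) := by
  have hmin : (0:ℝ) < min 1 (p/2) := lt_min one_pos (by linarith)
  have hmax : (0:ℝ) < max 2 (p/2) := lt_max_of_lt_left two_pos
  refine ⟨(2:ℝ)^|(p-2)/2| * ((max 2 (p/2))^2 + ((min 1 (p/2)/2)^2)⁻¹), ?_, ?_⟩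
  · have t1 : (0:ℝ) < (max 2 (p/2))^2 := pow_pos hmax 2
    have t2 : (0:ℝ) ≤ ((min 1 (p/2)/2)^2)⁻¹ := by positivity
    have t3 : (0:ℝ) < (2:ℝ)^|(p-2)/2| := Real.rpow_pos_of_pos two_pos _
    exact mul_pos t3 (by linarith)
  · intro ξ η hne
    rcases le_total ‖η‖ ‖ξ‖ with hc | hc
    · obtain ⟨hl, hu⟩ := half n p hp ξ η hne hc
      have hA : (0:ℝ) < 1 + ‖ξ‖^2 := by positivity
      have h1 : 1 + ‖ξ‖^2 ≤ 1 + ‖ξ‖^2 + ‖η‖^2 := le_add_of_nonneg_right (by positivity)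
      have h2 : 1 + ‖ξ‖^2 + ‖η‖^2 ≤ 2*(1 + ‖ξ‖^2) := by nlinarith [norm_nonneg ξ, norm_nonneg η]
      exact final_conv p hp hA h1 h2 hl hu
    · obtain ⟨hl, hu⟩ := half n p hp η ξ hne.symm hc
      rw [norm_sub_rev η ξ, norm_sub_rev ((1 + ‖η‖ ^ 2) ^ ((p - 2) / 4) • η)] at hl hu
      have hA : (0:ℝ) < 1 + ‖η‖^2 := by positivity
      have h1 : 1 + ‖η‖^2 ≤ 1 + ‖ξ‖^2 + ‖η‖^2 := by nlinarith [sq_nonneg ‖ξ‖]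
      have h2 : 1 + ‖ξ‖^2 + ‖η‖^2 ≤ 2*(1 + ‖η‖^2) := by nlinarith [norm_nonneg ξ, norm_nonneg η]
      exact final_conv p hp hA h1 h2 hl hu
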